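/- Let H : ℝ^N → ℝ be δ-good and satisfy the C-derivative bounds, for some δ, C > 0. Then for every x ∈ [−1,1]^N with |x|₂² ≤ 1 − δ there exists a nonzero vector v ∈ ℝ^N with ⟨v,x⟩ = 0 such that: (1) x + v ∈ [−1,1]^N; (2) v_i = 0 whenever |x_i| = 1; (3) H(x+v) − H(x) ≥ (ζ(|x|₂²)·√(1−|x|₂²) − δ)·|v|₂²; (4) |v|₂ ≤ δ/(10C); and (5) either |v|₂ = δ/(10C) or the number of indices i with |(x+v)_i| = 1 is strictly larger than the number of indices i with |x_i| = 1. -/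

import Mathlib

lemma taylor_aux (f g h k : ℝ → ℝ)
    (hfg : ∀ τ, HasDerivAt f (g τ) τ) (hgh : ∀ τ, HasDerivAt g (h τ) τ)
    (hhk : ∀ τ, HasDerivAt h (k τ) τ) (t C : ℝ) (ht : 0 ≤ t)
    (hg0 : 0 ≤ g 0) (hk : ∀ τ ∈ Set.Icc (0:ℝ) t, |k τ| ≤ C) :
    (h 0 - C * t) / 2 * t ^ 2 ≤ f t - f 0 := by
  have h0mem : (0:ℝ) ∈ Set.Icc (0:ℝ) t := ⟨le_rfl, ht⟩
  have hC0 : 0 ≤ C := le_trans (abs_nonneg _) (hk 0 h0mem)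
  set m : ℝ := h 0 - C * t with hm
  have hstep1 : ∀ τ ∈ Set.Icc (0:ℝ) t, m ≤ h τ := by
    intro τ hτ
    have hmv := Convex.norm_image_sub_le_of_norm_hasDerivWithin_le
      (f := h) (f' := k) (s := Set.Icc (0:ℝ) t)
      (fun y hy => (hhk y).hasDerivWithinAt)
      (fun y hy => by simpa [Real.norm_eq_abs] using hk y hy)
      (convex_Icc 0 t) h0mem hτ
    rw [Real.norm_eq_abs, Real.norm_eq_abs, sub_zero] at hmv
    have h1 : |h τ - h 0| ≤ C * t := by
      refine hmv.trans ?_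
      have : |τ| ≤ t := by rw [abs_of_nonneg hτ.1]; exact hτ.2
      nlinarith [abs_nonneg τ]
    have := abs_le.mp h1
    simp only [hm]; linarith [this.1]
  set F : ℝ → ℝ := fun τ => f τ - (f 0 + g 0 * τ + m / 2 * τ ^ 2) with hF
  set F1 : ℝ → ℝ := fun τ => g τ - (g 0 + m * τ) with hF1
  have hdF : ∀ τ, HasDerivAt F (F1 τ) τ := by
    intro τ
    have h1 : HasDerivAt (fun τ : ℝ => f 0 + g 0 * τ + m / 2 * τ ^ 2) (g 0 + m * τ) τ := by
      have := (((hasDerivAt_id τ).const_mul (g 0)).const_add (f 0)).add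
        ((hasDerivAt_pow 2 τ).const_mul (m / 2))
      refine this.congr_deriv ?_
      rw [show (2:ℕ) - 1 = 1 from rfl]; push_cast; ring
    exact (hfg τ).sub h1
  have hdF1 : ∀ τ, HasDerivAt F1 (h τ - m) τ := by
    intro τ
    have h1 : HasDerivAt (fun τ : ℝ => g 0 + m * τ) m τ := by
      simpa using ((hasDerivAt_id τ).const_mul m).const_add (g 0)
    exact (hgh τ).sub h1
  have hmono1 : MonotoneOn F1 (Set.Icc (0:ℝ) t) := by
    apply monotoneOn_of_deriv_nonneg (convex_Icc 0 t)
    · exact fun τ _ => (hdF1 τ).continuousAt.continuousWithinAt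
    · exact fun τ _ => ((hdF1 τ).differentiableAt).differentiableWithinAt
    · intro τ hτ
      rw [(hdF1 τ).deriv]
      rw [interior_Icc] at hτ
      have := hstep1 τ ⟨hτ.1.le, hτ.2.le⟩
      linarith
  have hF1nonneg : ∀ τ ∈ Set.Icc (0:ℝ) t, 0 ≤ F1 τ := by
    intro τ hτ
    have := hmono1 h0mem hτ hτ.1
    have hF10 : F1 0 = 0 := by simp [hF1]
    linarith
  have hmono : MonotoneOn F (Set.Icc (0:ℝ) t) := by
    apply monotoneOn_of_deriv_nonneg (convex_Icc 0 t)
    · exact fun τ _ => (hdF τ).continuousAt.continuousWithinAt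
    · exact fun τ _ => ((hdF τ).differentiableAt).differentiableWithinAt
    · intro τ hτ
      rw [(hdF τ).deriv, interior_Icc] at *
      exact hF1nonneg τ ⟨hτ.1.le, hτ.2.le⟩
  have hFt : 0 ≤ F t := by
    have := hmono h0mem (Set.right_mem_Icc.mpr ht) ht
    have hF0 : F 0 = 0 := by simp [hF]
    linarith
  have hgt : 0 ≤ g 0 * t := mul_nonneg hg0 ht
  simp only [hF] at hFt
  nlinarith [hFt]

lemma line_deriv {N : ℕ} (H : (Fin N → ℝ) → ℝ) {n : ℕ}
    (hd : Differentiable ℝ (iteratedFDeriv ℝ n H)) (x w : Fin N → ℝ) (τ : ℝ) :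
    HasDerivAt (fun t : ℝ => iteratedFDeriv ℝ n H (x + t • w) (fun _ => w))
      (iteratedFDeriv ℝ (n+1) H (x + τ • w) (fun _ => w)) τ := by
  have hcurve : HasDerivAt (fun t : ℝ => x + t • w) w τ := by
    simpa using ((hasDerivAt_id τ).smul_const w).const_add x
  have h1 := (((hd (x + τ • w)).hasFDerivAt).continuousMultilinear_apply_const
      (fun _ : Fin n => w)).comp_hasDerivAt τ hcurve
  rw [show (fun _ : Fin (n+1) => w) = Fin.cons w (fun _ : Fin n => w) from
    funext (Fin.cases rfl (fun i => rfl)), iteratedFDeriv_succ_apply_left]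
  exact h1



/-- Second derivative `ξ''(t) = ∑_{p=1}^P γ_p² p(p-1) t^{p-2}` of the mixture function. -/
noncomputable def xiSecond (P : ℕ) (γ : ℕ → ℝ) (t : ℝ) : ℝ :=
  ∑ p ∈ Finset.Icc 1 P, (γ p) ^ 2 * ((p : ℝ) * ((p : ℝ) - 1)) * t ^ (p - 2)

/-- `ζ(t) = √(ξ''(t))`. -/
noncomputable def zeta (P : ℕ) (γ : ℕ → ℝ) (t : ℝ) : ℝ :=
  Real.sqrt (xiSecond P γ t)

/-- `H` is `δ`-good: for every `ε ≥ δ`, every `x ∈ [-1,1]^N` and every `S ⊆ [N]` with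
`|S| ≥ εN` there is a nonzero `v` supported on `S`, orthogonal to `x`, along which the
(normalized) Hessian quadratic form is at least `(2ζ(|x|₂²)√ε − δ)`. -/
def IsGood (N P : ℕ) (γ : ℕ → ℝ) (δ : ℝ) (H : (Fin N → ℝ) → ℝ) : Prop :=
  ∀ ε : ℝ, δ ≤ ε → ∀ x : Fin N → ℝ, (∀ i, |x i| ≤ 1) →
    ∀ S : Finset (Fin N), ε * N ≤ (S.card : ℝ) →
      ∃ v : Fin N → ℝ, v ≠ 0 ∧ (∀ i, i ∉ S → v i = 0) ∧ (∑ i, v i * x i) = 0 ∧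
        (2 * zeta P γ ((∑ i, (x i) ^ 2) / N) * Real.sqrt ε - δ) * (∑ i, (v i) ^ 2) ≤
          (N : ℝ) * iteratedFDeriv ℝ 2 H x ![v, v]

/-- `H` satisfies the `C`-derivative bounds: it is three times continuously differentiable and
its directional derivatives of orders 1, 2, 3 along unit directions (in the normalized norm)
are bounded by `C` on the unit ball. -/
def DerivBounds (N : ℕ) (C : ℝ) (H : (Fin N → ℝ) → ℝ) : Prop :=
  ContDiff ℝ 3 H ∧
  ∀ σ : Fin N → ℝ, (∑ i, (σ i) ^ 2) / N ≤ 1 →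
    ∀ v : Fin N → ℝ, (∑ i, (v i) ^ 2) = (N : ℝ) →
      |fderiv ℝ H σ v| ≤ C ∧ |iteratedFDeriv ℝ 2 H σ ![v, v]| ≤ C ∧
        |iteratedFDeriv ℝ 3 H σ ![v, v, v]| ≤ C

/-- Lemma 4 of the paper: from any point of `[-1,1]^N` far from a corner, a
`δ`-good Hamiltonian with `C`-derivative bounds admits an orthogonal improvement step `v`. -/
theorem increment_step
    (N P : ℕ) (γ : ℕ → ℝ) (hγ : ∀ p, 0 ≤ γ p)
    (hmix : ∃ p, 2 ≤ p ∧ p ≤ P ∧ 0 < γ p)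
    (δ C : ℝ) (hδ : 0 < δ) (hC : 0 < C)
    (H : (Fin N → ℝ) → ℝ) (hgood : IsGood N P γ δ H) (hbd : DerivBounds N C H)
    (x : Fin N → ℝ) (hx : ∀ i, |x i| ≤ 1) (hxn : (∑ i, (x i) ^ 2) / N ≤ 1 - δ) :
    ∃ v : Fin N → ℝ, v ≠ 0 ∧ (∑ i, v i * x i) = 0 ∧
      (∀ i, |x i + v i| ≤ 1) ∧
      (∀ i, |x i| = 1 → v i = 0) ∧
      (zeta P γ ((∑ i, (x i) ^ 2) / N) * Real.sqrt (1 - (∑ i, (x i) ^ 2) / N) - δ) *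
          ((∑ i, (v i) ^ 2) / N) ≤ H (x + v) - H x ∧
      Real.sqrt ((∑ i, (v i) ^ 2) / N) ≤ δ / (10 * C) ∧
      (Real.sqrt ((∑ i, (v i) ^ 2) / N) = δ / (10 * C) ∨
        {i : Fin N | |x i| = 1}.ncard < {i : Fin N | |x i + v i| = 1}.ncard) := by
    -- N is positive
  rcases Nat.eq_zero_or_pos N with hN0 | hNpos
  · exfalso
    subst hN0
    obtain ⟨v, hv, -⟩ := hgood δ le_rfl x hx ∅ (by simp)
    exact hv (Subsingleton.elim v 0)
  have hN : (0:ℝ) < N := by exact_mod_cast hNpos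
  set Q : ℝ := ∑ i, (x i) ^ 2 with hQdef
  set ε : ℝ := 1 - Q / N with hεdef
  have hδε : δ ≤ ε := by simp only [hεdef]; linarith
  -- the support set S of non-extreme coordinates
  set S : Finset (Fin N) := Finset.univ.filter (fun i => |x i| < 1) with hSdef
  have hxS : ∀ i, i ∉ S → |x i| = 1 := by
    intro i hi
    simp only [hSdef, Finset.mem_filter, Finset.mem_univ, true_and, not_lt] at hi
    exact le_antisymm (hx i) hi
  have hScard : ε * N ≤ (S.card : ℝ) := by
    have h1 : ∀ i ∈ Sᶜ, (1:ℝ) ≤ (x i) ^ 2 := by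
      intro i hi
      rw [Finset.mem_compl] at hi
      have h' : x i ^ 2 = 1 := by rw [← sq_abs, hxS i hi]; norm_num
      linarith
    have h2 : ((Sᶜ.card : ℕ) : ℝ) ≤ Q := by
      calc ((Sᶜ.card : ℕ) : ℝ) = ∑ _i ∈ Sᶜ, (1:ℝ) := by simp
      _ ≤ ∑ i ∈ Sᶜ, (x i) ^ 2 := Finset.sum_le_sum h1
      _ ≤ ∑ i, (x i) ^ 2 := Finset.sum_le_sum_of_subset_of_nonneg
          (Finset.subset_univ _) (fun i _ _ => sq_nonneg _)
    have hle : S.card ≤ N := by simpa using Finset.card_le_univ S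
    have h3 : ((Sᶜ.card : ℕ) : ℝ) = (N : ℝ) - S.card := by
      rw [Finset.card_compl, Fintype.card_fin, Nat.cast_sub hle]
    have h4 : ε * N = (N : ℝ) - Q := by
      rw [hεdef]; field_simp
    rw [h4]
    rw [h3] at h2
    linarith
  -- apply goodness
  obtain ⟨v₀, hv₀, hsupp₀, horth₀, hquad₀⟩ := hgood ε hδε x hx S hScard
  -- normalize v₀
  set M : ℝ := ∑ i, (v₀ i) ^ 2 with hMdef
  have hM : 0 < M := by
    obtain ⟨j, hj⟩ := Function.ne_iff.mp hv₀
    have hj0 : v₀ j ≠ 0 := by simpa using hj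
    have hj' : (0:ℝ) < (v₀ j) ^ 2 :=
      lt_of_le_of_ne (sq_nonneg _) (Ne.symm (pow_ne_zero 2 hj0))
    have hle : (v₀ j) ^ 2 ≤ M := by
      rw [hMdef]
      exact Finset.single_le_sum (fun i _ => sq_nonneg (v₀ i)) (Finset.mem_univ j)
    linarith
  set a : ℝ := Real.sqrt (N / M) with hadef
  have ha : 0 < a := Real.sqrt_pos.mpr (by positivity)
  have ha2 : a ^ 2 = N / M := Real.sq_sqrt (by positivity)
  set u : Fin N → ℝ := a • v₀ with hudef
  have hu2 : (∑ i, (u i) ^ 2) = (N : ℝ) := by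
    simp only [hudef, Pi.smul_apply, smul_eq_mul, mul_pow, ← Finset.mul_sum, ← hMdef]
    rw [ha2]
    field_simp
  have e2 : ∀ z : Fin N → ℝ, ![z, z] = (fun _ : Fin 2 => z) := by
    intro z; funext i; fin_cases i <;> rfl
  have e3 : ∀ z : Fin N → ℝ, ![z, z, z] = (fun _ : Fin 3 => z) := by
    intro z; funext i; fin_cases i <;> rfl
  have hscale : ∀ (c : ℝ) (z : Fin N → ℝ),
      iteratedFDeriv ℝ 2 H x (fun _ : Fin 2 => c • z)
        = c ^ 2 * iteratedFDeriv ℝ 2 H x (fun _ : Fin 2 => z) := by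
    intro c z
    have := (iteratedFDeriv ℝ 2 H x).map_smul_univ (fun _ : Fin 2 => c) (fun _ : Fin 2 => z)
    simpa [smul_eq_mul, sq] using this
  have hu_quad : 2 * zeta P γ (Q / N) * Real.sqrt ε - δ ≤
      iteratedFDeriv ℝ 2 H x (fun _ : Fin 2 => u) := by
    rw [e2 v₀] at hquad₀
    have h5 : iteratedFDeriv ℝ 2 H x (fun _ : Fin 2 => u)
        = a ^ 2 * iteratedFDeriv ℝ 2 H x (fun _ : Fin 2 => v₀) := by
      rw [hudef]
      exact hscale a v₀
    rw [h5, ha2]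
    rw [div_mul_eq_mul_div, le_div_iff₀ hM]
    calc (2 * zeta P γ (Q / N) * Real.sqrt ε - δ) * M
        ≤ (N : ℝ) * iteratedFDeriv ℝ 2 H x (fun _ : Fin 2 => v₀) := hquad₀
      _ = (N : ℝ) * iteratedFDeriv ℝ 2 H x (fun _ : Fin 2 => v₀) := rfl
  have hu_orth : (∑ i, u i * x i) = 0 := by
    simp only [hudef, Pi.smul_apply, smul_eq_mul]
    simp only [mul_assoc]
    rw [← Finset.mul_sum, horth₀, mul_zero]
  have hu_supp : ∀ i, i ∉ S → u i = 0 := by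
    intro i hi; simp [hudef, hsupp₀ i hi]
  -- choose the sign
  obtain ⟨w, hw2, hworth, hwsupp, hwquad, hwg0⟩ :
      ∃ w : Fin N → ℝ, (∑ i, (w i) ^ 2) = (N : ℝ) ∧ (∑ i, w i * x i) = 0 ∧
        (∀ i, i ∉ S → w i = 0) ∧
        (2 * zeta P γ (Q / N) * Real.sqrt ε - δ ≤
          iteratedFDeriv ℝ 2 H x (fun _ : Fin 2 => w)) ∧
        0 ≤ fderiv ℝ H x w := by
    rcases le_or_gt 0 (fderiv ℝ H x u) with hpos | hneg
    · exact ⟨u, hu2, hu_orth, hu_supp, hu_quad, hpos⟩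
    · refine ⟨-u, by simpa using hu2, ?_, ?_, ?_, ?_⟩
      · simp only [Pi.neg_apply]
        simp only [neg_mul]
        rw [Finset.sum_neg_distrib, hu_orth, neg_zero]
      · intro i hi; simp [hu_supp i hi]
      · have : (fun _ : Fin 2 => -u) = (fun _ : Fin 2 => (-1 : ℝ) • u) := by
          funext _; simp
        rw [this, hscale]
        simpa using hu_quad
      · rw [map_neg]
        linarith
  have hwne : w ≠ 0 := by
    intro h
    rw [h] at hw2
    simp at hw2
    linarith
  -- the time of travel
  set T : Finset (Fin N) := Finset.univ.filter (fun i => w i ≠ 0) with hTdef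
  have hT : T.Nonempty := by
    obtain ⟨j, hj⟩ := Function.ne_iff.mp hwne
    refine ⟨j, ?_⟩
    simp only [hTdef, Finset.mem_filter, Finset.mem_univ, true_and]
    simpa using hj
  have hTS : ∀ i ∈ T, |x i| < 1 := by
    intro i hi
    simp only [hTdef, Finset.mem_filter, Finset.mem_univ, true_and] at hi
    by_contra h
    have : i ∉ S := by simp [hSdef, h]
    exact hi (hwsupp i this)
  set r : Fin N → ℝ := fun i => if 0 < w i then (1 - x i) / w i else (-1 - x i) / w i
    with hrdef
  have hrpos : ∀ i ∈ T, 0 < r i := by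
    intro i hi
    have hxi := abs_lt.mp (hTS i hi)
    have hwi : w i ≠ 0 := by
      simpa [hTdef] using hi
    simp only [hrdef]
    rcases lt_or_gt_of_ne hwi with hneg | hpos
    · rw [if_neg (by linarith)]
      apply div_pos_of_neg_of_neg <;> linarith
    · rw [if_pos hpos]
      apply div_pos <;> linarith
  have hrw : ∀ i ∈ T, x i + r i * w i = 1 ∨ x i + r i * w i = -1 := by
    intro i hi
    have hwi : w i ≠ 0 := by simpa [hTdef] using hi
    simp only [hrdef]
    rcases lt_or_gt_of_ne hwi with hneg | hpos
    · right; rw [if_neg (by linarith)]; field_simp; ring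
    · left; rw [if_pos hpos]; field_simp; ring
  set tb : ℝ := T.inf' hT r with htbdef
  have htbpos : 0 < tb := (Finset.lt_inf'_iff hT).mpr hrpos

  set t0 : ℝ := min (δ / (10 * C)) tb with ht0def
  have hdC : 0 < δ / (10 * C) := by positivity
  have ht0pos : 0 < t0 := lt_min hdC htbpos
  set v : Fin N → ℝ := t0 • w with hvdef
  have hvapp : ∀ i, v i = t0 * w i := fun i => rfl
  have ht0tb : t0 ≤ tb := min_le_right _ _
  have ht0C : t0 ≤ δ / (10 * C) := min_le_left _ _
  -- the box constraint along the whole segment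
  have hbox : ∀ τ, 0 ≤ τ → τ ≤ t0 → ∀ i, |x i + τ * w i| ≤ 1 := by
    intro τ h0τ hτt0 i
    by_cases hwi : w i = 0
    · simpa [hwi] using hx i
    · have hiT : i ∈ T := by
        simp only [hTdef, Finset.mem_filter, Finset.mem_univ, true_and]; exact hwi
      have hxi := abs_lt.mp (hTS i hiT)
      have hri : τ ≤ r i := le_trans hτt0 (le_trans ht0tb (Finset.inf'_le r hiT))
      have hrposi := hrpos i hiT
      rcases hrw i hiT with h1 | h1
      · have hwpos : 0 < w i := by
          rcases lt_or_ge 0 (w i) with h | h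
          · exact h
          · exfalso
            have := mul_nonpos_of_nonneg_of_nonpos hrposi.le h
            linarith
        have hub : τ * w i ≤ r i * w i := mul_le_mul_of_nonneg_right hri hwpos.le
        have hlb : 0 ≤ τ * w i := mul_nonneg h0τ hwpos.le
        refine abs_le.mpr ⟨by linarith, by linarith⟩
      · have hwneg : w i < 0 := by
          rcases lt_or_ge (w i) 0 with h | h
          · exact h
          · exfalso
            have := mul_nonneg hrposi.le h
            linarith
        have hlb : r i * w i ≤ τ * w i := mul_le_mul_of_nonpos_right hri hwneg.le
        have hub : τ * w i ≤ 0 := mul_nonpos_of_nonneg_of_nonpos h0τ hwneg.le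
        refine abs_le.mpr ⟨by linarith, by linarith⟩
  have hv3 : ∀ i, |x i + v i| ≤ 1 := fun i => hbox t0 ht0pos.le le_rfl i
  have hv4 : ∀ i, |x i| = 1 → v i = 0 := by
    intro i hxi
    have hiS : i ∉ S := by simp [hSdef, hxi]
    simp [hvapp, hwsupp i hiS]
  have hsumv : (∑ i, (v i) ^ 2) = t0 ^ 2 * N := by
    simp only [hvapp, mul_pow]
    rw [← Finset.mul_sum, hw2]
  have hsumvN : (∑ i, (v i) ^ 2) / N = t0 ^ 2 := by
    rw [hsumv]
    field_simp
  have hsqrtv : Real.sqrt ((∑ i, (v i) ^ 2) / N) = t0 := by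
    rw [hsumvN]
    exact Real.sqrt_sq ht0pos.le
  -- differentiability
  have hcd := hbd.1
  have hdiff : Differentiable ℝ H := hcd.differentiable (by norm_num)
  have hd1 : Differentiable ℝ (iteratedFDeriv ℝ 1 H) := by
    have h1 : ContDiff ℝ 1 (iteratedFDeriv ℝ 1 H) := hcd.iteratedFDeriv_right (by norm_num)
    exact h1.differentiable (by norm_num)
  have hd2 : Differentiable ℝ (iteratedFDeriv ℝ 2 H) := by
    have h1 : ContDiff ℝ 1 (iteratedFDeriv ℝ 2 H) := hcd.iteratedFDeriv_right (by norm_num)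
    exact h1.differentiable (by norm_num)
  have hfg : ∀ τ : ℝ, HasDerivAt (fun t => H (x + t • w))
      (iteratedFDeriv ℝ 1 H (x + τ • w) (fun _ : Fin 1 => w)) τ := by
    intro τ
    have hcurve : HasDerivAt (fun t : ℝ => x + t • w) w τ := by
      simpa using ((hasDerivAt_id τ).smul_const w).const_add x
    have h1 := ((hdiff (x + τ • w)).hasFDerivAt).comp_hasDerivAt τ hcurve
    rw [show iteratedFDeriv ℝ 1 H (x + τ • w) (fun _ : Fin 1 => w)
        = fderiv ℝ H (x + τ • w) w from by rw [iteratedFDeriv_one_apply]]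
    exact h1
  have hgh := fun τ => line_deriv H hd1 x w τ
  have hhk := fun τ => line_deriv H hd2 x w τ
  have hkbd : ∀ τ ∈ Set.Icc (0:ℝ) t0,
      |iteratedFDeriv ℝ 3 H (x + τ • w) (fun _ : Fin 3 => w)| ≤ C := by
    intro τ hτ
    have hσ : (∑ i, ((x + τ • w) i) ^ 2) / N ≤ 1 := by
      rw [div_le_one hN]
      calc ∑ i, ((x + τ • w) i) ^ 2 ≤ ∑ _i : Fin N, (1:ℝ) := by
            apply Finset.sum_le_sum
            intro i _
            have hb := hbox τ hτ.1 hτ.2 i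
            rw [show (x + τ • w) i = x i + τ * w i from rfl]
            exact (sq_le_one_iff_abs_le_one _).mpr hb
        _ = N := by simp
    have h1 := (hbd.2 _ hσ w hw2).2.2
    rwa [e3 w] at h1
  have hg0 : (0:ℝ) ≤ iteratedFDeriv ℝ 1 H (x + (0:ℝ) • w) (fun _ : Fin 1 => w) := by
    rw [show x + (0:ℝ) • w = x from by simp, iteratedFDeriv_one_apply]
    exact hwg0
  have key := taylor_aux (fun t => H (x + t • w)) _ _ _ hfg hgh hhk t0 C ht0pos.le hg0 hkbd
  have hx0 : x + (0:ℝ) • w = x := by simp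
  rw [hx0] at key
  have hCt0 : C * t0 ≤ δ / 10 := by
    have h1 := mul_le_mul_of_nonneg_left ht0C hC.le
    calc C * t0 ≤ C * (δ / (10 * C)) := h1
      _ = δ / 10 := by field_simp
  refine ⟨v, smul_ne_zero ht0pos.ne' hwne, ?_, hv3, hv4, ?_, ?_, ?_⟩
  · simp only [hvapp, mul_assoc]
    rw [← Finset.mul_sum, hworth, mul_zero]
  · -- the main energy increase inequality
    rw [hsumvN]
    have hstep : zeta P γ (Q / N) * Real.sqrt ε - δ ≤
        (iteratedFDeriv ℝ 2 H x (fun _ : Fin 2 => w) - C * t0) / 2 := by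
      linarith [hwquad, hCt0, hδ]
    calc (zeta P γ (Q / N) * Real.sqrt ε - δ) * t0 ^ 2
        ≤ (iteratedFDeriv ℝ 2 H x (fun _ : Fin 2 => w) - C * t0) / 2 * t0 ^ 2 :=
          mul_le_mul_of_nonneg_right hstep (sq_nonneg _)
      _ ≤ H (x + t0 • w) - H x := by simpa using key
      _ = H (x + v) - H x := by rw [hvdef]
  · rw [hsqrtv]
    exact ht0C
  · rcases le_total (δ / (10 * C)) tb with hle | hle
    · left
      rw [hsqrtv, ht0def, min_eq_left hle]
    · right
      obtain ⟨i₀, hi₀T, hi₀⟩ := Finset.exists_mem_eq_inf' hT r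
      have ht0r : t0 = r i₀ := by rw [ht0def, min_eq_right hle, htbdef, hi₀]
      have hi₀B : |x i₀ + v i₀| = 1 := by
        rw [hvapp, ht0r]
        rcases hrw i₀ hi₀T with h1 | h1 <;> rw [h1] <;> norm_num
      have hi₀A : ¬ |x i₀| = 1 := ne_of_lt (hTS i₀ hi₀T)
      have hsub : {i : Fin N | |x i| = 1} ⊆ {i : Fin N | |x i + v i| = 1} := by
        intro i hi
        simp only [Set.mem_setOf_eq] at hi ⊢
        rw [hv4 i hi, add_zero]
        exact hi
      apply Set.ncard_lt_ncard
      · exact (Set.ssubset_iff_of_subset hsub).mpr ⟨i₀, hi₀B, hi₀A⟩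
      · exact Set.toFinite _
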